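/- Let H be an m-uniform Veblen multi-hypergraph admitting an Euler rooting, and let e be an edge of the underlying hypergraph containing a vertex of degree one (a cored vertex). Then the multiplicity of e in H is k·m for some positive integer k, and in any Euler rooting every cored vertex of e occurs as a root of e exactly k times. -/
import Mathlib

lemma countP_bind' {β γ : Type*} (s : Multiset β) (f : β → Multiset γ) (p : γ → Prop)
    [DecidablePred p] :
    Multiset.countP p (s.bind f) = (s.map fun b => Multiset.countP p (f b)).sum := by
  induction s using Multiset.induction_on with
  | empty => simp
  | cons a s ih => simp [Multiset.cons_bind, ih]

lemma sum_map_ite {β : Type*} (s : Multiset β) (q : β → Prop) [DecidablePred q] (c : ℕ) :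
    (s.map fun b => if q b then c else 0).sum = c * s.countP q := by
  induction s using Multiset.induction_on with
  | empty => simp
  | cons a s ih =>
    simp only [Multiset.map_cons, Multiset.sum_cons, Multiset.countP_cons, ih, Nat.mul_add]
    split_ifs <;> simp [Nat.add_comm]

lemma countP_split {β : Type*} (s : Multiset β) (p q : β → Prop) [DecidablePred p]
    [DecidablePred q] (h : ∀ x ∈ s, q x → p x) :
    s.countP p = s.countP q + s.countP (fun x => p x ∧ ¬ q x) := by
  induction s using Multiset.induction_on with
  | empty => simp
  | cons a s ih =>
    have ha := h a (Multiset.mem_cons_self a s)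
    rw [Multiset.countP_cons, Multiset.countP_cons, Multiset.countP_cons,
      ih (fun x hx => h x (Multiset.mem_cons_of_mem hx))]
    by_cases hq : q a
    · simp [hq, ha hq]; omega
    · by_cases hp : p a <;> simp [hq, hp] <;> omega



/-- A multi-hypergraph is given by a multiset `E` of edges (finsets of vertices).
Its vertex set is the union of its edges. -/
def mhVerts {α : Type*} [DecidableEq α] (E : Multiset (Finset α)) : Finset α :=
  E.toFinset.sup id

/-- The degree of a vertex in a multi-hypergraph: the number of edge copies containing
it. -/
def mhDegree {α : Type*} [DecidableEq α] (E : Multiset (Finset α)) (v : α) : ℕ :=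
  (E.filter fun e => v ∈ e).card

/-- The arcs of the directed multigraph `R(F)` associated with a rooting `F`: each
rooted edge copy `(v, e)` contributes an arc from the root `v` to each of the other
vertices of `e`. -/
def rootingArcs {α : Type*} [DecidableEq α] (F : Multiset (α × Finset α)) :
    Multiset (α × α) :=
  F.bind fun p => (p.2.erase p.1).val.map fun u => (p.1, u)

/-- `F` is an Euler rooting of the multi-hypergraph `E`: every edge copy of `E` is
assigned a root vertex belonging to it, and the associated directed multigraph `R(F)` is
Eulerian (in-degree equals out-degree at every vertex, and it is connected). -/
def IsEulerRooting {α : Type*} [DecidableEq α] (E : Multiset (Finset α))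
    (F : Multiset (α × Finset α)) : Prop :=
  F.map Prod.snd = E ∧ (∀ p ∈ F, p.1 ∈ p.2) ∧
  (∀ v : α, ((rootingArcs F).filter fun a => a.1 = v).card =
    ((rootingArcs F).filter fun a => a.2 = v).card) ∧
  ∀ u ∈ mhVerts E, ∀ v ∈ mhVerts E,
    Relation.ReflTransGen (fun a b => (a, b) ∈ rootingArcs F ∨ (b, a) ∈ rootingArcs F) u v

/-- Let `H` be an `m`-uniform Veblen (i.e. `m`-valent) multi-hypergraph admitting an
Euler rooting, and let `e` be an edge of the underlying hypergraph containing a cored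
vertex (a vertex lying in only one distinct edge). Then the multiplicity of `e` is `k·m`
for some positive integer `k`, and in any Euler rooting every cored vertex of `e` occurs
as a root of `e` exactly `k` times. -/
theorem veblen_cored_edge_multiplicity {α : Type*} [DecidableEq α] (m : ℕ) (hm : 2 ≤ m)
    (E : Multiset (Finset α)) (huni : ∀ e ∈ E, e.card = m)
    (hval : ∀ v ∈ mhVerts E, m ∣ mhDegree E v)
    (F : Multiset (α × Finset α)) (hF : IsEulerRooting E F)
    (e : Finset α) (he : e ∈ E.toFinset)
    (hcored : ∃ v ∈ e, (E.toFinset.filter fun f => v ∈ f).card = 1) :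
    ∃ k : ℕ, 0 < k ∧ E.count e = k * m ∧
      ∀ v ∈ e, (E.toFinset.filter fun f => v ∈ f).card = 1 → F.count (v, e) = k := by
  obtain ⟨hmap, hroot, hbal, -⟩ := hF
  have heE : e ∈ E := Multiset.mem_toFinset.mp he
  have key : ∀ v ∈ e, (E.toFinset.filter fun f => v ∈ f).card = 1 →
      E.count e = m * F.count (v, e) := by
    intro v hv hc
    have huniq : ∀ f ∈ E, v ∈ f → f = e := by
      intro f hf hvf
      obtain ⟨a, ha⟩ := Finset.card_eq_one.mp hc
      have h1 : e ∈ E.toFinset.filter fun f => v ∈ f :=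
        Finset.mem_filter.mpr ⟨he, hv⟩
      have h2 : f ∈ E.toFinset.filter fun f => v ∈ f :=
        Finset.mem_filter.mpr ⟨Multiset.mem_toFinset.mpr hf, hvf⟩
      rw [ha, Finset.mem_singleton] at h1 h2
      rw [h1, h2]
    have hsnd : ∀ p ∈ F, p.2 ∈ E := by
      intro p hp
      rw [← hmap]
      exact Multiset.mem_map_of_mem _ hp
    have hfst : ∀ p ∈ F, p.1 = v → p = (v, e) := by
      intro p hp h1
      have h2 : p.2 = e := huniq p.2 (hsnd p hp) (h1 ▸ hroot p hp)
      exact Prod.ext h1 h2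
    have hcount : F.count (v, e) = F.countP fun p => p.1 = v := by
      rw [Multiset.count]
      exact Multiset.countP_congr rfl fun p hp =>
        propext ⟨fun h => by rw [← h], fun h => ((hfst p hp h).symm : (v, e) = p)⟩
    -- out-degree of v
    have hout : ((rootingArcs F).filter fun a => a.1 = v).card
        = (m - 1) * F.countP fun p => p.1 = v := by
      rw [← Multiset.countP_eq_card_filter, rootingArcs, countP_bind']
      rw [show (F.map fun p =>
          Multiset.countP (fun a => a.1 = v) ((p.2.erase p.1).val.map fun u => (p.1, u)))
          = F.map fun p => if p.1 = v then m - 1 else 0 from ?_, sum_map_ite]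
      refine Multiset.map_congr rfl fun p hp => ?_
      rw [Multiset.countP_map]
      have hcard : Multiset.card (p.2.erase p.1).val = m - 1 := by
        rw [show Multiset.card (p.2.erase p.1).val = (p.2.erase p.1).card from rfl,
          Finset.card_erase_of_mem (hroot p hp), huni p.2 (hsnd p hp)]
      by_cases h : p.1 = v
      · rw [if_pos h, Multiset.filter_eq_self.mpr fun a _ => h]
        exact hcard
      · rw [if_neg h, Multiset.filter_eq_nil.mpr fun a _ => h, Multiset.card_zero]
    -- in-degree of v
    have hin : ((rootingArcs F).filter fun a => a.2 = v).card
        = F.countP fun p => v ∈ p.2 ∧ ¬ p.1 = v := by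
      rw [← Multiset.countP_eq_card_filter, rootingArcs, countP_bind']
      rw [show (F.map fun p =>
          Multiset.countP (fun a => a.2 = v) ((p.2.erase p.1).val.map fun u => (p.1, u)))
          = F.map fun p => if v ∈ p.2 ∧ ¬ p.1 = v then 1 else 0 from ?_, sum_map_ite,
          Nat.one_mul]
      refine Multiset.map_congr rfl fun p hp => ?_
      rw [Multiset.countP_map]
      have hcp : Multiset.card (Multiset.filter (fun a => (p.1, a).2 = v)
          (p.2.erase p.1).val) = (p.2.erase p.1).val.count v := by
        rw [← Multiset.countP_eq_card_filter, Multiset.count]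
        exact Multiset.countP_congr rfl fun u _ => propext ⟨Eq.symm, Eq.symm⟩
      rw [hcp]
      by_cases h : v ∈ p.2 ∧ ¬ p.1 = v
      · rw [if_pos h]
        exact Multiset.count_eq_one_of_mem (p.2.erase p.1).nodup
          (Finset.mem_val.mpr (Finset.mem_erase.mpr ⟨fun hh => h.2 hh.symm, h.1⟩))
      · rw [if_neg h, Multiset.count_eq_zero]
        intro hmem
        obtain ⟨h1, h2⟩ := Finset.mem_erase.mp (Finset.mem_val.mp hmem)
        exact h ⟨h2, fun hh => h1 hh.symm⟩
    -- degree of v equals count of e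
    have hdeg : E.count e = F.countP fun p => v ∈ p.2 := by
      rw [Multiset.count, ← hmap, Multiset.countP_map, ← Multiset.countP_eq_card_filter]
      exact Multiset.countP_congr rfl fun p hp =>
        propext ⟨fun h => h ▸ hv, fun h => (huniq p.2 (hsnd p hp) h).symm⟩
    have hsplit : (F.countP fun p => v ∈ p.2)
        = (F.countP fun p => p.1 = v) + F.countP fun p => v ∈ p.2 ∧ ¬ p.1 = v :=
      countP_split F _ _ fun p hp h => h ▸ hroot p hp
    have hb := hbal v
    rw [hout, hin] at hb
    rw [hcount, hdeg, hsplit, ← hb]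
    have hm1 : 1 + (m - 1) = m := by omega
    calc (F.countP fun p => p.1 = v) + (m - 1) * F.countP fun p => p.1 = v
        = (1 + (m - 1)) * F.countP fun p => p.1 = v := by ring
      _ = m * F.countP fun p => p.1 = v := by rw [hm1]
  obtain ⟨v₀, hv₀, hc₀⟩ := hcored
  refine ⟨F.count (v₀, e), ?_, ?_, ?_⟩
  · have hpos : 0 < E.count e := Multiset.count_pos.mpr heE
    rw [key v₀ hv₀ hc₀] at hpos
    rcases Nat.eq_zero_or_pos (F.count (v₀, e)) with h | h
    · rw [h, Nat.mul_zero] at hpos; omega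
    · exact h
  · rw [key v₀ hv₀ hc₀, Nat.mul_comm]
  · intro v hv hc
    have h1 := key v hv hc
    have h2 := key v₀ hv₀ hc₀
    exact Nat.eq_of_mul_eq_mul_left (by omega : 0 < m) (by rw [← h1, ← h2])
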